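/- arXiv:2509.11618 — 4 statements merged into one kernel-verified Lean document; each statement's English description precedes it below -/
import Mathlib

section
/- Suppose F(t,·) : ℝ^d → ℝ^d is differentiable with Jacobian F'_x(t,x) for every t ∈ [0,T], the map u ↦ V̂(t,u) is differentiable and satisfies A_t V̂(t,u) + R F(t, u + V̂(t,u)) = 0 for all (t,u) ∈ [0,T] × ℝ^d, and the Jacobian matrix J(t,x) := A_t + R F'_x(t,x) is invertible with |J(t,x)⁻¹| ≤ L_J for all (t,x). Set L̂ := (sup_{t∈[0,T]} |A_t|)·L_J + d. Then |∂_u V̂(t,u)| ≤ L̂ for all (t,u) ∈ [0,T] × ℝ^d, and consequently |V̂(t,u) − V̂(t,v)| ≤ L̂ |u − v| for all t ∈ [0,T] and u, v ∈ ℝ^d. -/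
open Matrix

/-- Euclidean norm of a vector in `ℝ^d`. -/
noncomputable def vnorm {d : ℕ} (x : Fin d → ℝ) : ℝ :=
  Real.sqrt (∑ i, (x i) ^ 2)

/-- Frobenius norm of a real matrix: `|B| = sqrt (trace (Bᵀ * B))`. -/
noncomputable def mnorm {d m : ℕ} (B : Matrix (Fin d) (Fin m) ℝ) : ℝ :=
  Real.sqrt ((Bᵀ * B).trace)

section Aux

attribute [local instance] Matrix.frobeniusNormedAddCommGroup Matrix.frobeniusNormedRing

lemma trace_eq {d m : ℕ} (B : Matrix (Fin d) (Fin m) ℝ) :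
    (Bᵀ * B).trace = ∑ i, ∑ j, (B i j) ^ 2 := by
  rw [Matrix.trace]
  rw [Finset.sum_comm]
  simp [Matrix.diag, Matrix.mul_apply, pow_two]

lemma mnorm_eq_norm {d m : ℕ} (B : Matrix (Fin d) (Fin m) ℝ) : mnorm B = ‖B‖ := by
  rw [Matrix.frobenius_norm_def, ← Real.sqrt_eq_rpow, mnorm, trace_eq]
  congr 1
  refine Finset.sum_congr rfl fun i _ => Finset.sum_congr rfl fun j _ => ?_
  rw [Real.rpow_two, Real.norm_eq_abs, sq_abs]

lemma mnorm_nonneg {d m : ℕ} (B : Matrix (Fin d) (Fin m) ℝ) : 0 ≤ mnorm B :=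
  Real.sqrt_nonneg _

lemma vnorm_nonneg {d : ℕ} (x : Fin d → ℝ) : 0 ≤ vnorm x := Real.sqrt_nonneg _

lemma mnorm_sub_le {d : ℕ} (B C : Matrix (Fin d) (Fin d) ℝ) :
    mnorm (B - C) ≤ mnorm B + mnorm C := by
  rw [mnorm_eq_norm, mnorm_eq_norm, mnorm_eq_norm]
  exact norm_sub_le _ _

lemma mnorm_mul_le {d : ℕ} (B C : Matrix (Fin d) (Fin d) ℝ) :
    mnorm (B * C) ≤ mnorm B * mnorm C := by
  rw [mnorm_eq_norm, mnorm_eq_norm, mnorm_eq_norm]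
  exact Matrix.frobenius_norm_mul B C

lemma mnorm_one_le {d : ℕ} (hd : 1 ≤ d) : mnorm (1 : Matrix (Fin d) (Fin d) ℝ) ≤ d := by
  have h1 : mnorm (1 : Matrix (Fin d) (Fin d) ℝ) = Real.sqrt d := by
    rw [mnorm, Matrix.transpose_one, Matrix.one_mul, Matrix.trace_one]
    simp
  rw [h1]
  have hd1 : (1:ℝ) ≤ (d:ℝ) := by exact_mod_cast hd
  have : Real.sqrt d ≤ Real.sqrt ((d:ℝ)^2) := Real.sqrt_le_sqrt (by nlinarith)
  rwa [Real.sqrt_sq (by positivity)] at this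

lemma vnorm_mulVec_le {d m : ℕ} (B : Matrix (Fin d) (Fin m) ℝ) (x : Fin m → ℝ) :
    vnorm (B.mulVec x) ≤ mnorm B * vnorm x := by
  have h2 : (0:ℝ) ≤ (Bᵀ * B).trace := by
    rw [trace_eq]; positivity
  rw [vnorm, mnorm, vnorm, ← Real.sqrt_mul h2]
  apply Real.sqrt_le_sqrt
  rw [trace_eq]
  calc ∑ i, (B.mulVec x i) ^ 2
      ≤ ∑ i, (∑ j, (B i j) ^ 2) * (∑ j, (x j) ^ 2) := by
        refine Finset.sum_le_sum fun i _ => ?_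
        simpa [Matrix.mulVec, dotProduct] using
          Finset.sum_mul_sq_le_sq_mul_sq Finset.univ (fun j => B i j) x
    _ = (∑ i, ∑ j, (B i j) ^ 2) * ∑ j, (x j) ^ 2 := by rw [Finset.sum_mul]

lemma vnorm_eq_norm {d : ℕ} (w : Fin d → ℝ) :
    ‖(EuclideanSpace.equiv (Fin d) ℝ).symm w‖ = vnorm w := by
  rw [EuclideanSpace.norm_eq, vnorm]
  congr 1
  refine Finset.sum_congr rfl fun i _ => ?_
  rw [Real.norm_eq_abs, sq_abs]
  rfl

end Aux

theorem stmt2 (T : ℝ) (hT : 0 < T) (d : ℕ) (hd : 1 ≤ d)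
    (A Am : ℝ → Matrix (Fin d) (Fin d) ℝ)
    -- `Am t` is the Moore–Penrose pseudoinverse of `A t`
    (hPI : ∀ t ∈ Set.Icc (0:ℝ) T, A t * Am t * A t = A t ∧ Am t * A t * Am t = Am t ∧
      (A t * Am t)ᵀ = A t * Am t ∧ (Am t * A t)ᵀ = Am t * A t)
    -- `sup_{t ∈ [0,T]} |A_t| < ∞`
    (hAbdd : BddAbove ((fun t => mnorm (A t)) '' Set.Icc (0:ℝ) T))
    (F : ℝ → (Fin d → ℝ) → Fin d → ℝ)
    (F' : ℝ → (Fin d → ℝ) → Matrix (Fin d) (Fin d) ℝ)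
    -- `F(t,·)` is differentiable with Jacobian `F' t x`
    (hF : ∀ t ∈ Set.Icc (0:ℝ) T, ∀ x : Fin d → ℝ,
      HasFDerivAt (F t) (LinearMap.toContinuousLinearMap (F' t x).mulVecLin) x)
    (V : ℝ → (Fin d → ℝ) → Fin d → ℝ)
    (V' : ℝ → (Fin d → ℝ) → Matrix (Fin d) (Fin d) ℝ)
    -- `u ↦ V̂(t,u)` is differentiable with Jacobian `V' t u`
    (hV : ∀ t ∈ Set.Icc (0:ℝ) T, ∀ u : Fin d → ℝ,
      HasFDerivAt (V t) (LinearMap.toContinuousLinearMap (V' t u).mulVecLin) u)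
    -- `A_t V̂(t,u) + R F(t, u + V̂(t,u)) = 0` with `R = I - A_t A_t⁻`
    (hveq : ∀ t ∈ Set.Icc (0:ℝ) T, ∀ u : Fin d → ℝ,
      (A t).mulVec (V t u) + (1 - A t * Am t).mulVec (F t (u + V t u)) = 0)
    (LJ : ℝ) (hLJ : 0 < LJ)
    -- the Jacobian `J(t,x) = A_t + R F'_x(t,x)` is invertible with `|J⁻¹| ≤ L_J`
    (hJ : ∀ t ∈ Set.Icc (0:ℝ) T, ∀ x : Fin d → ℝ,
      IsUnit (A t + (1 - A t * Am t) * F' t x) ∧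
      mnorm ((A t + (1 - A t * Am t) * F' t x)⁻¹) ≤ LJ)
    (Lhat : ℝ)
    -- `L̂ = (sup_{t ∈ [0,T]} |A_t|) L_J + d`
    (hLhat : Lhat = sSup ((fun t => mnorm (A t)) '' Set.Icc (0:ℝ) T) * LJ + d) :
    ∀ t ∈ Set.Icc (0:ℝ) T,
      (∀ u : Fin d → ℝ, mnorm (V' t u) ≤ Lhat) ∧
      (∀ u v : Fin d → ℝ, vnorm (V t u - V t v) ≤ Lhat * vnorm (u - v)) := by
  intro t ht
  set R : Matrix (Fin d) (Fin d) ℝ := 1 - A t * Am t with hRdef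
  -- the derivative bound
  have key : ∀ u : Fin d → ℝ, mnorm (V' t u) ≤ Lhat := by
    intro u
    set x : Fin d → ℝ := u + V t u with hxdef
    set J : Matrix (Fin d) (Fin d) ℝ := A t + R * F' t x with hJdef
    -- derivative of the constraint map
    have hD1 : HasFDerivAt (fun w => (A t).mulVec (V t w))
        ((LinearMap.toContinuousLinearMap (A t).mulVecLin).comp
          (LinearMap.toContinuousLinearMap (V' t u).mulVecLin)) u :=
      (LinearMap.toContinuousLinearMap (A t).mulVecLin).hasFDerivAt.comp u (hV t ht u)
    have hD2 : HasFDerivAt (fun w : Fin d → ℝ => w + V t w)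
        (ContinuousLinearMap.id ℝ (Fin d → ℝ) +
          LinearMap.toContinuousLinearMap (V' t u).mulVecLin) u :=
      (hasFDerivAt_id u).add (hV t ht u)
    have hD4 : HasFDerivAt (fun w => F t (w + V t w))
        ((LinearMap.toContinuousLinearMap (F' t x).mulVecLin).comp
          (ContinuousLinearMap.id ℝ (Fin d → ℝ) +
            LinearMap.toContinuousLinearMap (V' t u).mulVecLin)) u :=
      (hF t ht x).comp u hD2
    have hD5 : HasFDerivAt (fun w => R.mulVec (F t (w + V t w)))
        ((LinearMap.toContinuousLinearMap R.mulVecLin).comp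
          ((LinearMap.toContinuousLinearMap (F' t x).mulVecLin).comp
            (ContinuousLinearMap.id ℝ (Fin d → ℝ) +
              LinearMap.toContinuousLinearMap (V' t u).mulVecLin))) u :=
      (LinearMap.toContinuousLinearMap R.mulVecLin).hasFDerivAt.comp u hD4
    have hD : HasFDerivAt (fun w => (A t).mulVec (V t w) + R.mulVec (F t (w + V t w)))
        ((LinearMap.toContinuousLinearMap (A t).mulVecLin).comp
          (LinearMap.toContinuousLinearMap (V' t u).mulVecLin) +
         (LinearMap.toContinuousLinearMap R.mulVecLin).comp
          ((LinearMap.toContinuousLinearMap (F' t x).mulVecLin).comp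
            (ContinuousLinearMap.id ℝ (Fin d → ℝ) +
              LinearMap.toContinuousLinearMap (V' t u).mulVecLin))) u := hD1.add hD5
    have hzero : ((LinearMap.toContinuousLinearMap (A t).mulVecLin).comp
          (LinearMap.toContinuousLinearMap (V' t u).mulVecLin) +
         (LinearMap.toContinuousLinearMap R.mulVecLin).comp
          ((LinearMap.toContinuousLinearMap (F' t x).mulVecLin).comp
            (ContinuousLinearMap.id ℝ (Fin d → ℝ) +
              LinearMap.toContinuousLinearMap (V' t u).mulVecLin))) = 0 := by
      have hconst : HasFDerivAt (fun w => (A t).mulVec (V t w) + R.mulVec (F t (w + V t w)))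
          (0 : (Fin d → ℝ) →L[ℝ] (Fin d → ℝ)) u := by
        have hG : (fun w => (A t).mulVec (V t w) + R.mulVec (F t (w + V t w)))
            = fun _ => (0 : Fin d → ℝ) := funext (hveq t ht)
        rw [hG]
        exact hasFDerivAt_const _ _
      exact hD.unique hconst
    -- matrix-level identity
    have hM : A t * V' t u + R * F' t x * (1 + V' t u) = 0 := by
      ext i j
      have hw := congrFun (congrArg (DFunLike.coe) hzero) (Pi.single j 1)
      simp only [ContinuousLinearMap.add_apply, ContinuousLinearMap.comp_apply,
        ContinuousLinearMap.coe_id', id_eq, ContinuousLinearMap.zero_apply,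
        LinearMap.coe_toContinuousLinearMap', Matrix.mulVecLin_apply] at hw
      have hw2 : (A t * V' t u + R * F' t x * (1 + V' t u)).mulVec (Pi.single j 1) = 0 := by
        rw [Matrix.add_mulVec, ← Matrix.mulVec_mulVec, ← Matrix.mulVec_mulVec,
          ← Matrix.mulVec_mulVec, Matrix.add_mulVec, Matrix.one_mulVec]
        exact hw
      have := congrFun hw2 i
      simpa [Matrix.mulVec_single] using this
    obtain ⟨hJu, hJinv⟩ := hJ t ht x
    have hdet : IsUnit J.det := (Matrix.isUnit_iff_isUnit_det J).mp hJu
    have hJV : J * V' t u = A t - J := by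
      have h1 : A t * V' t u + (R * F' t x + R * F' t x * V' t u) = 0 := by
        rw [← mul_one_add]; exact hM
      have h2 : (A t + R * F' t x) * V' t u = -(R * F' t x) := by
        rw [add_mul, eq_neg_iff_add_eq_zero]
        calc A t * V' t u + R * F' t x * V' t u + R * F' t x
            = A t * V' t u + (R * F' t x + R * F' t x * V' t u) := by abel
          _ = 0 := h1
      rw [← hJdef] at h2
      rw [h2, hJdef]; abel
    have hVid : V' t u = J⁻¹ * A t - 1 := by
      have h3 : J⁻¹ * (J * V' t u) = J⁻¹ * (A t - J) := by rw [hJV]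
      rw [← mul_assoc, Matrix.nonsing_inv_mul J hdet, one_mul, mul_sub,
        Matrix.nonsing_inv_mul J hdet] at h3
      exact h3
    -- now bound
    have hAle : mnorm (A t) ≤ sSup ((fun t => mnorm (A t)) '' Set.Icc (0:ℝ) T) :=
      le_csSup hAbdd ⟨t, ht, rfl⟩
    calc mnorm (V' t u) = mnorm (J⁻¹ * A t - 1) := by rw [hVid]
      _ ≤ mnorm (J⁻¹ * A t) + mnorm 1 := mnorm_sub_le _ _
      _ ≤ mnorm J⁻¹ * mnorm (A t) + d :=
          add_le_add (mnorm_mul_le _ _) (mnorm_one_le hd)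
      _ ≤ LJ * sSup ((fun t => mnorm (A t)) '' Set.Icc (0:ℝ) T) + d :=
          add_le_add (mul_le_mul hJinv hAle (mnorm_nonneg _) hLJ.le) le_rfl
      _ = Lhat := by rw [hLhat, mul_comm]
  refine ⟨key, ?_⟩
  -- Lipschitz bound via the mean value inequality on Euclidean space
  have hLhat0 : 0 ≤ Lhat := le_trans (mnorm_nonneg _) (key 0)
  intro u v
  set E := EuclideanSpace.equiv (Fin d) ℝ with hE
  set W : EuclideanSpace ℝ (Fin d) → EuclideanSpace ℝ (Fin d) :=
    fun y => E.symm (V t (E y)) with hW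
  set D : EuclideanSpace ℝ (Fin d) → (EuclideanSpace ℝ (Fin d) →L[ℝ] EuclideanSpace ℝ (Fin d)) :=
    fun y => (E.symm : (Fin d → ℝ) →L[ℝ] EuclideanSpace ℝ (Fin d)).comp
      ((LinearMap.toContinuousLinearMap (V' t (E y)).mulVecLin).comp
        (E : EuclideanSpace ℝ (Fin d) →L[ℝ] (Fin d → ℝ))) with hD
  have hWd : ∀ y : EuclideanSpace ℝ (Fin d), HasFDerivAt W (D y) y := by
    intro y
    exact (E.symm : (Fin d → ℝ) →L[ℝ] EuclideanSpace ℝ (Fin d)).hasFDerivAt.comp y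
      ((hV t ht (E y)).comp y
        (E : EuclideanSpace ℝ (Fin d) →L[ℝ] (Fin d → ℝ)).hasFDerivAt)
  have hDbound : ∀ y, ‖D y‖ ≤ Lhat := by
    intro y
    refine ContinuousLinearMap.opNorm_le_bound _ hLhat0 fun z => ?_
    have h1 : (D y) z = E.symm ((V' t (E y)).mulVec (E z)) := rfl
    have h2 : ‖z‖ = vnorm (E z) := by
      rw [← vnorm_eq_norm (E z)]
      congr 1
    rw [h1, vnorm_eq_norm, h2]
    exact le_trans (vnorm_mulVec_le _ _)
      (mul_le_mul_of_nonneg_right (key _) (vnorm_nonneg _))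
  have hmv := convex_univ.norm_image_sub_le_of_norm_hasFDerivWithin_le
    (f := W) (f' := D) (C := Lhat)
    (fun y _ => (hWd y).hasFDerivWithinAt) (fun y _ => hDbound y)
    (Set.mem_univ (E.symm v)) (Set.mem_univ (E.symm u))
  have hWu : W (E.symm u) = E.symm (V t u) := by simp [hW]
  have hWv : W (E.symm v) = E.symm (V t v) := by simp [hW]
  rw [hWu, hWv, ← map_sub, ← map_sub, vnorm_eq_norm, vnorm_eq_norm] at hmv
  exact hmv
end

section
/- Suppose that for every (t,x) ∈ [0,T] × ℝ^d the equation A_t v + R F(t, x + v) = 0 has exactly one solution v ∈ ℝ^d, denoted V̂(t,x). Then V̂(t, Px) = Qx + V̂(t,x) for all (t,x) ∈ [0,T] × ℝ^d; equivalently, x = Px + Qx and the algebraic component satisfies Qx + V̂(t,x) = V̂(t,Px). -/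
open Matrix

theorem stmt6 (T : ℝ) (hT : 0 < T) (d : ℕ) (hd : 1 ≤ d)
    (A Am : ℝ → Matrix (Fin d) (Fin d) ℝ) (P : Matrix (Fin d) (Fin d) ℝ)
    -- `Am t` is the Moore–Penrose pseudoinverse of `A t`
    (hPI : ∀ t ∈ Set.Icc (0:ℝ) T, A t * Am t * A t = A t ∧ Am t * A t * Am t = Am t ∧
      (A t * Am t)ᵀ = A t * Am t ∧ (Am t * A t)ᵀ = Am t * A t)
    -- `P = A_t⁻ A_t` is independent of `t`
    (hP : ∀ t ∈ Set.Icc (0:ℝ) T, Am t * A t = P)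
    (F : ℝ → (Fin d → ℝ) → Fin d → ℝ)
    (V : ℝ → (Fin d → ℝ) → Fin d → ℝ)
    -- for every `(t,x)`, `v = V̂(t,x)` is the unique solution of
    -- `A_t v + R F(t, x + v) = 0` where `R = I − A_t A_t⁻`
    (hV : ∀ t ∈ Set.Icc (0:ℝ) T, ∀ x v : Fin d → ℝ,
      ((A t).mulVec v + (1 - A t * Am t).mulVec (F t (x + v)) = 0 ↔ v = V t x)) :
    ∀ t ∈ Set.Icc (0:ℝ) T, ∀ x : Fin d → ℝ,
      V t (P.mulVec x) = (1 - P).mulVec x + V t x := by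
  intro t ht x
  have hPA : A t * P = A t := by
    rw [← hP t ht, ← mul_assoc]; exact (hPI t ht).1
  have hv := (hV t ht x (V t x)).mpr rfl
  symm
  rw [← hV t ht (P.mulVec x) _]
  have key : P.mulVec x + ((1 - P).mulVec x + V t x) = x + V t x := by
    rw [Matrix.sub_mulVec, Matrix.one_mulVec]; abel
  rw [key]
  have hzero : (A t).mulVec ((1 - P).mulVec x) = 0 := by
    rw [Matrix.mulVec_mulVec, mul_sub, mul_one, hPA, sub_self, Matrix.zero_mulVec]
  rw [Matrix.mulVec_add, hzero, zero_add]
  exact hv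
end

section
/- Let d ≥ 1 and for each t ∈ [0,T] let A_t := M diag(σ₁(t), 0, …, 0) N with M, N ∈ ℝ^{d×d} orthogonal and 0 < σ₁(t) ≤ σ̄, and let A_t⁻ := Nᵀ diag(σ₁(t)⁻¹, 0, …, 0) Mᵀ and P := A_t⁻ A_t. Suppose (I − A_t A_t⁻) G(t,x) = 0 for all (t,x), and suppose that for constants L₁ > 0 and p₁ > 1: 2⟨Px − Py, A_t⁻ F(t,x) − A_t⁻ F(t,y)⟩ + (p₁ − 1)|A_t⁻ G(t,x) − A_t⁻ G(t,y)|² ≤ L₁ |x − y|² for all x, y ∈ ℝ^d and t ∈ [0,T]. Then for all x, y ∈ ℝ^d and t ∈ [0,T]: 2⟨A_t x − A_t y, F(t,x) − F(t,y)⟩ + (p₁ − 1)|G(t,x) − G(t,y)|² ≤ σ̄² L₁ |x − y|². -/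
open Matrix

/-- Euclidean inner product on `ℝ^d`. -/
def vdot {d : ℕ} (x y : Fin d → ℝ) : ℝ := ∑ i, x i * y i

lemma trace_tr_mul {d m : ℕ} (B : Matrix (Fin d) (Fin m) ℝ) :
    (Bᵀ * B).trace = ∑ j, ∑ i, (B i j)^2 := by
  simp [Matrix.trace, Matrix.diag, Matrix.mul_apply, sq]

lemma trace_tr_mul_nonneg {d m : ℕ} (B : Matrix (Fin d) (Fin m) ℝ) :
    0 ≤ (Bᵀ * B).trace := by
  rw [trace_tr_mul]
  positivity

lemma mnorm_sq {d m : ℕ} (B : Matrix (Fin d) (Fin m) ℝ) :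
    mnorm B ^ 2 = (Bᵀ * B).trace :=
  Real.sq_sqrt (trace_tr_mul_nonneg B)

lemma vdot_mulVec_left {d : ℕ} (B : Matrix (Fin d) (Fin d) ℝ) (u w : Fin d → ℝ) :
    vdot (B.mulVec u) w = vdot u (Bᵀ.mulVec w) := by
  show (B.mulVec u) ⬝ᵥ w = u ⬝ᵥ (Bᵀ.mulVec w)
  rw [dotProduct_comm, Matrix.dotProduct_mulVec, Matrix.mulVec_transpose]
  exact dotProduct_comm _ _


lemma diag_congr {d : ℕ} {f g : Fin d → ℝ} (h : ∀ i, f i = g i) :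
    Matrix.diagonal f = Matrix.diagonal g := by
  rw [funext h]


lemma conj_eq {d k : ℕ} (A : Matrix (Fin d) (Fin d) ℝ) (H : Matrix (Fin d) (Fin k) ℝ) :
    (A * H)ᵀ * (A * H) = Hᵀ * (Aᵀ * A) * H := by
  rw [Matrix.transpose_mul]; simp only [Matrix.mul_assoc]

lemma trace_conj_le {d k : ℕ} (Nm : Matrix (Fin d) (Fin d) ℝ) (hNm : Nmᵀ * Nm = 1)
    (e : Fin d → ℝ) (he : ∀ i, e i = 0 ∨ e i = 1)
    (H : Matrix (Fin d) (Fin k) ℝ) :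
    (Hᵀ * (Nmᵀ * Matrix.diagonal e * Nm) * H).trace ≤ (Hᵀ * H).trace := by
  have hEE : Matrix.diagonal e * Matrix.diagonal e = Matrix.diagonal e := by
    rw [Matrix.diagonal_mul_diagonal]
    apply diag_congr
    intro i
    rcases he i with h | h <;> simp [h]
  have hEt : (Matrix.diagonal e)ᵀ = Matrix.diagonal e := Matrix.diagonal_transpose e
  have key : Hᵀ * (Nmᵀ * Matrix.diagonal e * Nm) * H
      = (Matrix.diagonal e * (Nm * H))ᵀ * (Matrix.diagonal e * (Nm * H)) := by
    rw [Matrix.transpose_mul, Matrix.transpose_mul, hEt]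
    calc Hᵀ * (Nmᵀ * Matrix.diagonal e * Nm) * H
        = Hᵀ * Nmᵀ * (Matrix.diagonal e * Matrix.diagonal e) * (Nm * H) := by
          rw [hEE]; simp only [Matrix.mul_assoc]
      _ = Hᵀ * Nmᵀ * Matrix.diagonal e * (Matrix.diagonal e * (Nm * H)) := by
          simp only [Matrix.mul_assoc]
  have key2 : Hᵀ * H = (Nm * H)ᵀ * (Nm * H) := by
    rw [Matrix.transpose_mul]
    calc Hᵀ * H = Hᵀ * (Nmᵀ * Nm) * H := by rw [hNm, Matrix.mul_one]
      _ = Hᵀ * Nmᵀ * (Nm * H) := by simp only [Matrix.mul_assoc]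
  rw [key, key2, trace_tr_mul, trace_tr_mul]
  apply Finset.sum_le_sum
  intro j _
  apply Finset.sum_le_sum
  intro i _
  have hij : (Matrix.diagonal e * (Nm * H)) i j = e i * (Nm * H) i j :=
    Matrix.diagonal_mul e (Nm * H) i j
  rw [hij]
  rcases he i with h | h <;> simp [h] <;> positivity

theorem stmt11 (T : ℝ) (hT : 0 < T) (d m : ℕ) (hd : 1 ≤ d) (hm : 1 ≤ m)
    (σbar : ℝ) (hσbar : 0 < σbar)
    (M N : Matrix (Fin d) (Fin d) ℝ)
    (hM : Mᵀ * M = 1 ∧ M * Mᵀ = 1) (hN : Nᵀ * N = 1 ∧ N * Nᵀ = 1)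
    (σ1 : ℝ → ℝ) (hσ1 : ∀ t ∈ Set.Icc (0:ℝ) T, 0 < σ1 t ∧ σ1 t ≤ σbar)
    (A Am : ℝ → Matrix (Fin d) (Fin d) ℝ)
    (hA : ∀ t, A t = M * Matrix.diagonal (fun i : Fin d => if (i:ℕ) = 0 then σ1 t else 0) * N)
    (hAm : ∀ t, Am t =
      Nᵀ * Matrix.diagonal (fun i : Fin d => if (i:ℕ) = 0 then (σ1 t)⁻¹ else 0) * Mᵀ)
    (F : ℝ → (Fin d → ℝ) → Fin d → ℝ)
    (G : ℝ → (Fin d → ℝ) → Matrix (Fin d) (Fin m) ℝ)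
    -- `(I − A_t A_t⁻) G(t,x) = 0`
    (hRG : ∀ t ∈ Set.Icc (0:ℝ) T, ∀ x : Fin d → ℝ, (1 - A t * Am t) * G t x = 0)
    (L1 p1 : ℝ) (hL1 : 0 < L1) (hp1 : 1 < p1)
    -- coupled monotonicity, with `P = A_t⁻ A_t`
    (hmono : ∀ t ∈ Set.Icc (0:ℝ) T, ∀ x y : Fin d → ℝ,
      2 * vdot ((Am t * A t).mulVec x - (Am t * A t).mulVec y)
          ((Am t).mulVec (F t x) - (Am t).mulVec (F t y)) +
        (p1 - 1) * mnorm (Am t * G t x - Am t * G t y) ^ 2 ≤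
        L1 * vnorm (x - y) ^ 2) :
    ∀ t ∈ Set.Icc (0:ℝ) T, ∀ x y : Fin d → ℝ,
      2 * vdot ((A t).mulVec x - (A t).mulVec y) (F t x - F t y) +
        (p1 - 1) * mnorm (G t x - G t y) ^ 2 ≤
        σbar ^ 2 * L1 * vnorm (x - y) ^ 2 := by
  intro t ht x y
  obtain ⟨hs, hsb⟩ := hσ1 t ht
  set s := σ1 t with hsdef
  set D : Matrix (Fin d) (Fin d) ℝ :=
    Matrix.diagonal (fun i : Fin d => if (i:ℕ) = 0 then s else 0) with hD
  set Di : Matrix (Fin d) (Fin d) ℝ :=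
    Matrix.diagonal (fun i : Fin d => if (i:ℕ) = 0 then s⁻¹ else 0) with hDi
  set E : Matrix (Fin d) (Fin d) ℝ :=
    Matrix.diagonal (fun i : Fin d => if (i:ℕ) = 0 then (1:ℝ) else 0) with hE
  -- basic diagonal identities
  have hsne : s ≠ 0 := hs.ne'
  have hDsmul : D = (s^2) • Di := by
    rw [hD, hDi, ← Matrix.diagonal_smul]
    apply diag_congr
    intro i
    by_cases h : (i:ℕ) = 0
    · simp only [h, if_true, Pi.smul_apply, smul_eq_mul]
      field_simp
    · simp [h]
  have hDiD : Di * D = E := by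
    rw [hD, hDi, hE, Matrix.diagonal_mul_diagonal]
    apply diag_congr
    intro i
    by_cases h : (i:ℕ) = 0 <;> simp [h, inv_mul_cancel₀ hsne]
  have hEDi : E * Di = Di := by
    rw [hDi, hE, Matrix.diagonal_mul_diagonal]
    apply diag_congr
    intro i
    by_cases h : (i:ℕ) = 0 <;> simp [h]
  have hEE : E * E = E := by
    rw [hE, Matrix.diagonal_mul_diagonal]
    apply diag_congr
    intro i
    by_cases h : (i:ℕ) = 0 <;> simp [h]
  have hEt : Eᵀ = E := by rw [hE, Matrix.diagonal_transpose]
  -- transpose of A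
  have hAt : (A t)ᵀ = (s^2) • Am t := by
    rw [hA, hAm, Matrix.transpose_mul, Matrix.transpose_mul, Matrix.diagonal_transpose,
      ← hD, ← hDi, hDsmul]
    simp only [Matrix.mul_smul, Matrix.smul_mul, Matrix.mul_assoc]
  -- P = Am A = Nᵀ E N
  have hP : Am t * A t = Nᵀ * E * N := by
    rw [hA, hAm, ← hD, ← hDi]
    calc Nᵀ * Di * Mᵀ * (M * D * N) = Nᵀ * Di * (Mᵀ * M) * D * N := by
          simp only [Matrix.mul_assoc]
      _ = Nᵀ * (Di * D) * N := by rw [hM.1]; simp only [Matrix.mul_one, Matrix.mul_assoc]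
      _ = Nᵀ * E * N := by rw [hDiD]
  -- (Am A)ᵀ = Am A, and (Am A)ᵀ * Am = Am
  have hPt : (Am t * A t)ᵀ = Am t * A t := by
    rw [hP, Matrix.transpose_mul, Matrix.transpose_mul, Matrix.transpose_transpose, hEt,
      Matrix.mul_assoc]
  have hPtAm : (Am t * A t)ᵀ * Am t = Am t := by
    rw [hPt, hP, hAm, ← hDi]
    calc Nᵀ * E * N * (Nᵀ * Di * Mᵀ)
        = Nᵀ * E * (N * Nᵀ) * (Di * Mᵀ) := by simp only [Matrix.mul_assoc]
      _ = Nᵀ * (E * Di) * Mᵀ := by rw [hN.2]; simp only [Matrix.mul_one, Matrix.mul_assoc]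
      _ = Nᵀ * Di * Mᵀ := by rw [hEDi]
  -- Aᵀ A = s² • (Am A)
  have hAtA : (A t)ᵀ * A t = (s^2) • (Am t * A t) := by
    rw [hAt, Matrix.smul_mul]
  -- dot product identities
  have t1 : vdot ((A t).mulVec (x - y)) (F t x - F t y)
      = s^2 * vdot (x - y) ((Am t).mulVec (F t x - F t y)) := by
    rw [vdot_mulVec_left, hAt, Matrix.smul_mulVec]
    show (x - y) ⬝ᵥ (s^2 • ((Am t).mulVec (F t x - F t y))) = _
    rw [dotProduct_smul]
    rfl
  have t2 : vdot ((Am t * A t).mulVec (x - y)) ((Am t).mulVec (F t x - F t y))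
      = vdot (x - y) ((Am t).mulVec (F t x - F t y)) := by
    rw [vdot_mulVec_left, Matrix.mulVec_mulVec, hPtAm]
  -- G identity
  have hGx := hRG t ht x
  have hGy := hRG t ht y
  rw [Matrix.sub_mul, Matrix.one_mul, sub_eq_zero] at hGx hGy
  have hG : G t x - G t y = A t * (Am t * (G t x - G t y)) := by
    conv_lhs => rw [hGx, hGy]
    simp only [Matrix.mul_sub, Matrix.mul_assoc]
  -- norm inequality
  have hGnorm : mnorm (G t x - G t y) ^ 2 ≤ s^2 * mnorm (Am t * (G t x - G t y)) ^ 2 := by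
    rw [mnorm_sq, mnorm_sq]
    have e1 : (G t x - G t y)ᵀ * (G t x - G t y)
        = (Am t * (G t x - G t y))ᵀ * ((A t)ᵀ * A t) * (Am t * (G t x - G t y)) := by
      conv_lhs => rw [hG]
      exact conj_eq (A t) (Am t * (G t x - G t y))
    rw [e1, hAtA, Matrix.mul_smul, Matrix.smul_mul, Matrix.trace_smul, smul_eq_mul]
    apply mul_le_mul_of_nonneg_left _ (sq_nonneg s)
    rw [hP, hE]
    exact trace_conj_le N hN.1 _
      (fun i => by by_cases h : (i:ℕ) = 0 <;> simp [h]) _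
  -- assemble
  have key := hmono t ht x y
  rw [← Matrix.mulVec_sub, ← Matrix.mulVec_sub, ← Matrix.mul_sub] at key
  rw [← Matrix.mulVec_sub]
  rw [t1]
  set c := vdot (x - y) ((Am t).mulVec (F t x - F t y)) with hc
  rw [t2] at key
  have hvn : 0 ≤ L1 * vnorm (x - y) ^ 2 := by positivity
  have hss : s^2 ≤ σbar^2 := by nlinarith
  have hmnH : 0 ≤ mnorm (Am t * (G t x - G t y)) ^ 2 := sq_nonneg _
  nlinarith [mul_le_mul_of_nonneg_left key (sq_nonneg s),
    mul_le_mul_of_nonneg_left hGnorm (by linarith : (0:ℝ) ≤ p1 - 1),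
    mul_le_mul_of_nonneg_right hss hvn, hmnH, sq_nonneg s]
end

section
/- Let A := diag(1/2, 10, 0) ∈ ℝ^{3×3}, F(x) := (−x₁³, 0, 0)ᵀ and G(x) := diag(0, x₁², 0). Then for all x, y ∈ ℝ³: 2⟨Ax − Ay, F(x) − F(y)⟩ + |G(x) − G(y)|² = x₁ y₁ (x₁ − y₁)², and for every L₂ > 0 there exist x, y ∈ ℝ³ such that x₁ y₁ (x₁ − y₁)² > L₂ |x − y|². In particular there exists no constant L₂ > 0 with 2⟨Ax − Ay, F(x) − F(y)⟩ + |G(x) − G(y)|² ≤ L₂ |x − y|² for all x, y ∈ ℝ³. -/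
open Matrix

/-- `A = diag(1/2, 10, 0)`. -/
noncomputable def A14 : Matrix (Fin 3) (Fin 3) ℝ := Matrix.diagonal ![1/2, 10, 0]

/-- `F(x) = (−x₁³, 0, 0)ᵀ`. -/
def F14 (x : Fin 3 → ℝ) : Fin 3 → ℝ := ![-(x 0) ^ 3, 0, 0]

/-- `G(x) = diag(0, x₁², 0)`. -/
def G14 (x : Fin 3 → ℝ) : Matrix (Fin 3) (Fin 3) ℝ := Matrix.diagonal ![0, (x 0) ^ 2, 0]


lemma key : ∀ x y : Fin 3 → ℝ,
      2 * vdot (A14.mulVec x - A14.mulVec y) (F14 x - F14 y) +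
        mnorm (G14 x - G14 y) ^ 2 = x 0 * y 0 * (x 0 - y 0) ^ 2 := by
  intro x y
  have htr : ((G14 x - G14 y)ᵀ * (G14 x - G14 y)).trace = ((x 0)^2 - (y 0)^2)^2 := by
    simp [G14, Matrix.trace, Matrix.mul_apply, Fin.sum_univ_three, Matrix.diagonal]
    ring
  have h : mnorm (G14 x - G14 y) ^ 2 = ((x 0)^2 - (y 0)^2)^2 := by
    rw [mnorm, htr, Real.sq_sqrt (by positivity)]
  rw [h]
  simp [vdot, A14, F14, Matrix.mulVec, Matrix.diagonal, dotProduct, Fin.sum_univ_three]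
  ring

theorem stmt14 :
    (∀ x y : Fin 3 → ℝ,
      2 * vdot (A14.mulVec x - A14.mulVec y) (F14 x - F14 y) +
        mnorm (G14 x - G14 y) ^ 2 = x 0 * y 0 * (x 0 - y 0) ^ 2) ∧
    (∀ L2 : ℝ, 0 < L2 → ∃ x y : Fin 3 → ℝ,
      x 0 * y 0 * (x 0 - y 0) ^ 2 > L2 * vnorm (x - y) ^ 2) ∧
    ¬ ∃ L2 : ℝ, 0 < L2 ∧ ∀ x y : Fin 3 → ℝ,
      2 * vdot (A14.mulVec x - A14.mulVec y) (F14 x - F14 y) +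
        mnorm (G14 x - G14 y) ^ 2 ≤ L2 * vnorm (x - y) ^ 2 := by
  have part2 : ∀ L2 : ℝ, 0 < L2 → ∃ x y : Fin 3 → ℝ,
      x 0 * y 0 * (x 0 - y 0) ^ 2 > L2 * vnorm (x - y) ^ 2 := by
    intro L2 hL2
    refine ⟨![L2 + 2, 0, 0], ![L2 + 1, 0, 0], ?_⟩
    have hv : vnorm (![L2 + 2, 0, 0] - ![L2 + 1, 0, 0]) ^ 2 = 1 := by
      have : (∑ i, ((![L2 + 2, 0, 0] - ![L2 + 1, 0, 0]) i) ^ 2) = 1 := by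
        norm_num [Fin.sum_univ_three, Matrix.cons_val_two, Matrix.tail_cons]
      rw [vnorm, this, Real.sqrt_one, one_pow]
    rw [hv]
    simp only [Matrix.cons_val_zero]
    nlinarith
  refine ⟨key, part2, ?_⟩
  rintro ⟨L2, hL2, hall⟩
  obtain ⟨x, y, hxy⟩ := part2 L2 hL2
  have := hall x y
  rw [key x y] at this
  linarith
end
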